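/- Let κ be a regular cardinal, let I be a set of cardinality κ, and let J = [I]^{<κ} be the ideal of subsets of I of cardinality < κ. In the quotient Boolean algebra P(I)/J, any family of κ many pairwise disjoint subsets A_i ⊆ I (i < κ), each of cardinality κ, has no least upper bound: for every upper bound X of the classes [A_i] there is a strictly smaller upper bound. -/
import Mathlib


/-!
STATEMENT 0: In the quotient Boolean algebra `P(I)/[I]^{<κ}` (whose order on
representatives is `[X] ≤ [Y] ↔ #(X \ Y) < κ`), any family of κ many pairwise
disjoint subsets of `I`, each of cardinality κ, has no least upper bound:
every upper bound admits a strictly smaller upper bound.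
We index the family by `I` itself (which has cardinality κ).
-/

open Cardinal

theorem stmt0 {I : Type u} (κ : Cardinal.{u}) (hκ : κ.IsRegular)
    (hI : #I = κ) (A : I → Set I)
    (hdisj : Pairwise (Function.onFun Disjoint A))
    (hcard : ∀ i, #(A i) = κ)
    -- `X` represents an upper bound of the classes `[A i]` in `P(I)/[I]^{<κ}`:
    (X : Set I) (hX : ∀ i, #(A i \ X : Set I) < κ) :
    -- there is a strictly smaller upper bound `[Y] < [X]`:
    ∃ Y : Set I, (∀ i, #(A i \ Y : Set I) < κ) ∧
      #(Y \ X : Set I) < κ ∧ ¬ #(X \ Y : Set I) < κ := by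
  have haleph : ℵ₀ ≤ κ := hκ.aleph0_le
  -- pick a point of `A i ∩ X` for each `i`
  have hne : ∀ i, (A i ∩ X).Nonempty := by
    intro i
    rcases Set.eq_empty_or_nonempty (A i ∩ X) with h | h
    · exfalso
      have hsub : A i ⊆ A i \ X := by
        intro y hy
        refine ⟨hy, fun hyX => ?_⟩
        exact Set.eq_empty_iff_forall_notMem.mp h y ⟨hy, hyX⟩
      have := (Cardinal.mk_le_mk_of_subset hsub).trans_lt (hX i)
      rw [hcard i] at this
      exact lt_irrefl _ this
    · exact h
  choose x hx using hne
  have hxA : ∀ i, x i ∈ A i := fun i => (hx i).1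
  have hxX : ∀ i, x i ∈ X := fun i => (hx i).2
  have hxinj : Function.Injective x := by
    intro i j hij
    by_contra hne'
    exact (hdisj hne').le_bot ⟨hxA i, hij ▸ hxA j⟩
  set D : Set I := Set.range x with hD
  refine ⟨X \ D, ?_, ?_, ?_⟩
  · intro i
    have hsub : (A i \ (X \ D) : Set I) ⊆ (A i \ X) ∪ {x i} := by
      rintro y ⟨hyA, hy⟩
      by_cases hyX : y ∈ X
      · have hyD : y ∈ D := by
          by_contra h
          exact hy ⟨hyX, h⟩
        rcases hyD with ⟨j, rfl⟩
        right
        by_cases hji : j = i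
        · simp [hji]
        · exact absurd ⟨hxA j, hyA⟩ ((hdisj hji).le_bot ·)
      · exact Or.inl ⟨hyA, hyX⟩
    calc #(A i \ (X \ D) : Set I) ≤ #((A i \ X) ∪ {x i} : Set I) :=
          Cardinal.mk_le_mk_of_subset hsub
      _ ≤ #(A i \ X : Set I) + #({x i} : Set I) := Cardinal.mk_union_le _ _
      _ < κ := by
          apply Cardinal.add_lt_of_lt haleph (hX i)
          simpa using Cardinal.one_lt_aleph0.trans_le haleph
  · have : (X \ D) \ X = (∅ : Set I) := by
      ext y; simp only [Set.mem_diff, Set.mem_empty_iff_false, iff_false]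
      rintro ⟨⟨h1, _⟩, h2⟩; exact h2 h1
    rw [this]
    simpa using hκ.pos
  · have hXY : X \ (X \ D) = D := by
      ext y
      simp only [Set.mem_diff, not_and, not_not]
      constructor
      · rintro ⟨hyX, h⟩; exact h hyX
      · rintro hyD
        rcases hyD with ⟨j, rfl⟩
        exact ⟨hxX j, fun _ => ⟨j, rfl⟩⟩
    rw [hXY]
    have : #D = κ := by
      rw [hD, Cardinal.mk_range_eq _ hxinj, hI]
    rw [this]
    exact lt_irrefl κ
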